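/- Let G be a profinite group such that G/Z(G) is a pro-p group and Z(G) ⊆ G'. Then G is a pro-p group. -/

import Mathlib

open Subgroup

/-- Finite group auxiliary lemma: if `C` is a central subgroup contained in the
commutator subgroup such that `Q/C` has `p`-power order, then `Q` has `p`-power
order. -/
lemma aux_ppow (p : ℕ) [Fact p.Prime] {Q : Type*} [Group Q] [Finite Q]
    (C : Subgroup Q) [C.Normal] (h1 : C ≤ Subgroup.center Q) (h2 : C ≤ commutator Q)
    (n : ℕ) (hcard : Nat.card (Q ⧸ C) = p ^ n) : ∃ m, Nat.card Q = p ^ m := by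
  have hQ0 : Nat.card Q ≠ 0 := Nat.card_pos.ne'
  have hkey : ∀ q : ℕ, q.Prime → q ∣ Nat.card Q → q = p := by
    intro q hq hdvd
    by_contra hne
    haveI : Fact q.Prime := ⟨hq⟩
    obtain ⟨S⟩ : Nonempty (Sylow q Q) := inferInstance
    -- the image of `S` in `Q ⧸ C` is both a `q`-group and a `p`-group, hence trivial
    have hSC : (S : Subgroup Q) ≤ C := by
      rw [← QuotientGroup.ker_mk' C, ← Subgroup.map_eq_bot_iff]
      have hq' : IsPGroup q ((S : Subgroup Q).map (QuotientGroup.mk' C)) := S.2.map _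
      have hp' : IsPGroup p ((S : Subgroup Q).map (QuotientGroup.mk' C)) :=
        (IsPGroup.of_card hcard).to_subgroup _
      obtain ⟨a, ha⟩ := hq'.exists_card_eq
      obtain ⟨b, hb⟩ := hp'.exists_card_eq
      rw [← Subgroup.card_eq_one, ha]
      rcases Nat.eq_zero_or_pos a with h | h
      · rw [h, pow_zero]
      · exfalso
        apply hne
        have hqd : q ∣ p ^ b := by
          rw [← hb, ha]
          exact dvd_pow_self q h.ne'
        exact (Nat.prime_dvd_prime_iff_eq hq (Fact.out)).mp (hq.dvd_of_dvd_pow hqd)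
    have hScenter : (S : Subgroup Q) ≤ Subgroup.center Q := hSC.trans h1
    -- `S` is central, so Burnside's transfer applies
    have hP : Subgroup.normalizer (S : Set Q) ≤ Subgroup.centralizer (S : Set Q) := by
      intro g _
      rw [Subgroup.mem_centralizer_iff]
      intro s hs
      exact (Subgroup.mem_center_iff.mp (hScenter hs) g).symm
    haveI : IsMulCommutative (S : Subgroup Q) :=
      ⟨⟨fun a b => Subtype.ext (Subgroup.mem_center_iff.mp (hScenter b.2) a)⟩⟩
    have hker := by open scoped IsMulCommutative in exact Abelianization.commutator_subset_ker (MonoidHom.transferSylow S hP)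
    have hSk : (S : Subgroup Q) ≤ (MonoidHom.transferSylow S hP).ker :=
      le_trans hSC (le_trans h2 hker)
    have hdisj := MonoidHom.ker_transferSylow_disjoint S hP S S.2
    have hbot : (S : Subgroup Q) = ⊥ :=
      le_bot_iff.mp (le_trans (le_inf hSk le_rfl) hdisj.le_bot)
    have hcard_S := S.card_eq_multiplicity
    rw [hbot, Subgroup.card_bot] at hcard_S
    have he : (Nat.card Q).factorization q = 0 := by
      by_contra h
      exact hq.one_lt.ne' ((pow_eq_one_iff.mp hcard_S.symm).resolve_right h)
    exact absurd he (Nat.Prime.factorization_pos_of_dvd hq hQ0 hdvd).ne'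
  exact ⟨_, Nat.eq_prime_pow_of_unique_prime_dvd hQ0 (fun {d} hd hdvd => hkey d hd hdvd)⟩

/-- If `G` is a profinite group such that `G/Z(G)` is a pro-`p` group and
`Z(G)` is contained in the closed derived subgroup `G'`, then `G` is a
pro-`p` group.  (Pro-`p`: every open normal subgroup has `p`-power index.) -/
theorem stmt9 (p : ℕ) [Fact p.Prime]
    (G : Type*) [Group G] [TopologicalSpace G] [IsTopologicalGroup G]
    [CompactSpace G] [TotallyDisconnectedSpace G] [T2Space G]
    (hquot : ∀ N : Subgroup (G ⧸ Subgroup.center G), N.Normal →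
      IsOpen (N : Set (G ⧸ Subgroup.center G)) →
      ∃ n : ℕ, Nat.card ((G ⧸ Subgroup.center G) ⧸ N) = p ^ n)
    (hZ : Subgroup.center G ≤ (commutator G).topologicalClosure) :
    ∀ N : Subgroup G, N.Normal → IsOpen (N : Set G) →
      ∃ n : ℕ, Nat.card (G ⧸ N) = p ^ n := by
  intro N hN hNopen
  haveI := hN
  set M : Subgroup G := Subgroup.center G ⊔ N with hMdef
  haveI hMnormal : M.Normal := Subgroup.sup_normal _ _
  have hMopen : IsOpen (M : Set G) := Subgroup.isOpen_mono le_sup_right hNopen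
  -- the image of `M` in `G ⧸ Z(G)` is open and normal, so has `p`-power index
  let π : G →* G ⧸ Subgroup.center G := QuotientGroup.mk' (Subgroup.center G)
  have hπ : Function.Surjective π := QuotientGroup.mk'_surjective _
  haveI hM₁normal : (M.map π).Normal := hMnormal.map π hπ
  have hM₁open : IsOpen ((M.map π : Subgroup (G ⧸ Subgroup.center G)) :
      Set (G ⧸ Subgroup.center G)) := by
    have := QuotientGroup.isOpenMap_coe (N := Subgroup.center G) (M : Set G) hMopen
    rw [Subgroup.coe_map]; exact this
  obtain ⟨n, hn⟩ := hquot (M.map π) hM₁normal hM₁open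
  have hGM : Nat.card (G ⧸ M) = p ^ n := by
    rw [← Nat.card_congr
      (QuotientGroup.quotientQuotientEquivQuotient (Subgroup.center G) M le_sup_left).toEquiv]
    exact hn
  -- move to the finite quotient `G ⧸ N`
  let κ : G →* G ⧸ N := QuotientGroup.mk' N
  have hκ : Function.Surjective κ := QuotientGroup.mk'_surjective _
  haveI : (M.map κ).Normal := hMnormal.map κ hκ
  haveI : Finite (G ⧸ N) := N.quotient_finite_of_isOpen hNopen
  have hQC : Nat.card ((G ⧸ N) ⧸ M.map κ) = p ^ n := by
    rw [Nat.card_congr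
      (QuotientGroup.quotientQuotientEquivQuotient N M le_sup_right).toEquiv]
    exact hGM
  -- `M.map κ` is the image of the center of `G`
  have hCM : M.map κ = (Subgroup.center G).map κ := by
    rw [hMdef, Subgroup.map_sup]
    have : N.map κ = ⊥ := (Subgroup.map_eq_bot_iff N).mpr (by rw [QuotientGroup.ker_mk'])
    rw [this, sup_bot_eq]
  -- the image of the center is central
  have hc1 : M.map κ ≤ Subgroup.center (G ⧸ N) := by
    rw [hCM]
    rintro x hx
    rw [Subgroup.mem_map] at hx
    obtain ⟨z, hz, rfl⟩ := hx
    rw [Subgroup.mem_center_iff]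
    intro g
    obtain ⟨g, rfl⟩ := hκ g
    rw [← map_mul, ← map_mul, Subgroup.mem_center_iff.mp hz g]
  -- the image of the center is contained in the commutator subgroup
  have hc2 : M.map κ ≤ _root_.commutator (G ⧸ N) := by
    rw [hCM]
    have hcomm_eq : _root_.commutator (G ⧸ N) = (_root_.commutator G).map κ := by
      rw [_root_.commutator, _root_.commutator, Subgroup.map_commutator,
        Subgroup.map_top_of_surjective κ hκ]
    rw [hcomm_eq]
    refine le_trans (Subgroup.map_mono hZ) ?_
    -- the preimage of `(commutator G).map κ` is open (it contains `N`), hence closed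
    have hNle : N ≤ Subgroup.comap κ ((commutator G).map κ) := by
      intro x hx
      have : κ x = 1 := by
        rwa [← MonoidHom.mem_ker, QuotientGroup.ker_mk']
      rw [Subgroup.mem_comap, this]
      exact one_mem _
    have hopen : IsOpen ((Subgroup.comap κ ((commutator G).map κ) : Subgroup G) : Set G) :=
      Subgroup.isOpen_mono hNle hNopen
    have hclosed := (Subgroup.comap κ ((commutator G).map κ)).isClosed_of_isOpen hopen
    have hle : (commutator G).topologicalClosure ≤ Subgroup.comap κ ((commutator G).map κ) :=
      Subgroup.topologicalClosure_minimal _ (Subgroup.le_comap_map _ _) hclosed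
    refine le_trans (Subgroup.map_mono hle) ?_
    exact Subgroup.map_comap_le _ _
  exact aux_ppow p (M.map κ) hc1 hc2 n hQC
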